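/- Let X = {x,y,z} be a 3-element set and let δ be a symbolic 3-dissimilarity on X with values in M ∪ {⊙}. Then there exists a labelled level-1 network N on X with δ = δ_N if and only if δ satisfies the Helly-type property: δ(x,y,z) ∈ {δ(x,y), δ(x,z), δ(y,z)}. -/

import Mathlib

/-- A rooted phylogenetic network on leaf set `X`: a rooted DAG whose leaves are
identified with `X`, with no vertex of indegree one and outdegree one. -/
structure PhyloNetwork (X : Type) [Fintype X] [DecidableEq X] where
  V : Type
  [instFin : Fintype V]
  [instDec : DecidableEq V]
  adj : V → V → Prop
  root : V
  leaf : X → V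
  acyclic : ∀ v : V, ¬ Relation.TransGen adj v v
  root_no_in : ∀ u : V, ¬ adj u root
  connected : ∀ v : V, Relation.ReflTransGen adj root v
  leaf_inj : Function.Injective leaf
  leaf_no_out : ∀ (x : X) (w : V), ¬ adj (leaf x) w
  leaves_only : ∀ v : V, (∀ w : V, ¬ adj v w) → v = root ∨ ∃ x, leaf x = v
  no_inout_one : ∀ v : V, ¬ ((∃! u : V, adj u v) ∧ (∃! w : V, adj v w))

namespace PhyloNetwork

variable {X : Type} [Fintype X] [DecidableEq X]

/-- Reachability by a directed path. -/
def reaches (N : PhyloNetwork X) : N.V → N.V → Prop := Relation.ReflTransGen N.adj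

/-- The offspring set of a vertex: all leaves below it. -/
def F (N : PhyloNetwork X) (v : N.V) : Set X := {x | N.reaches v (N.leaf x)}

/-- `v` is a leaf vertex. -/
def IsLeafV (N : PhyloNetwork X) (v : N.V) : Prop := ∃ x, N.leaf x = v

/-- `v` is a lowest common ancestor of the set `Y` of leaves. -/
def IsLca (N : PhyloNetwork X) (Y : Finset X) (v : N.V) : Prop :=
  (∀ x ∈ Y, x ∈ N.F v) ∧ ∀ w : N.V, N.adj v w → ¬ (∀ x ∈ Y, x ∈ N.F w)

/-- A cycle of a (level-1) network: two edge-disjoint, internally vertex-disjoint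
directed paths from a root `r` to a hybrid `h`, with at least 3 vertices in total.
`side1` and `side2` list the internal vertices of the two sides in order. -/
structure NCycle (N : PhyloNetwork X) where
  r : N.V
  h : N.V
  side1 : List N.V
  side2 : List N.V
  chain1 : List.Chain N.adj r (side1 ++ [h])
  chain2 : List.Chain N.adj r (side2 ++ [h])
  ne : r ≠ h
  nodup1 : (r :: (side1 ++ [h])).Nodup
  nodup2 : (r :: (side2 ++ [h])).Nodup
  disj : ∀ v ∈ side1, v ∉ side2
  nontriv : side1 ≠ [] ∨ side2 ≠ []

/-- The vertex set of a cycle. -/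
def NCycle.verts {N : PhyloNetwork X} (C : NCycle N) : Set N.V :=
  {C.r, C.h} ∪ {v | v ∈ C.side1} ∪ {v | v ∈ C.side2}

/-- A level-1 network: every vertex belongs to at most one cycle. -/
def IsLevelOne (N : PhyloNetwork X) : Prop :=
  ∀ C C' : NCycle N, ∀ v : N.V, v ∈ C.verts → v ∈ C'.verts → C.verts = C'.verts

/-- `R(C)`: the leaves below the root of the cycle `C`. -/
def NCycle.RC {N : PhyloNetwork X} (C : NCycle N) : Set X := N.F C.r

/-- `H(C)`: the leaves below the hybrid of the cycle `C`. -/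
def NCycle.HC {N : PhyloNetwork X} (C : NCycle N) : Set X := N.F C.h

/-- `v` is the last ancestor `v_C(x)` of the leaf `x` lying in the cycle `C`. -/
def NCycle.LastAnc {N : PhyloNetwork X} (C : NCycle N) (v : N.V) (x : X) : Prop :=
  v ∈ C.verts ∧ N.reaches v (N.leaf x) ∧
    ∀ w ∈ C.verts, N.reaches w (N.leaf x) → N.reaches w v

end PhyloNetwork

/-- A symbolic 3-dissimilarity on `X` with values in `M ∪ {⊙}` (`⊙` = `none`):
singletons get `⊙`, sets of size 2 or 3 get values in `M`. -/
structure SymbolicDissim3 (X M : Type) [DecidableEq X] where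
  val : Finset X → Option M
  singleton_none : ∀ A : Finset X, A.card = 1 → val A = none
  pair_some : ∀ A : Finset X, A.card = 2 ∨ A.card = 3 → val A ≠ none

/-- The labelled network `(N,t)` represents `δ`: for every `Y ⊆ X` of size 2 or 3,
`δ(Y) = t(lca_N(Y))`. -/
def PhyloNetwork.Represents {X M : Type} [Fintype X] [DecidableEq X]
    (N : PhyloNetwork X) (t : N.V → M) (d : SymbolicDissim3 X M) : Prop :=
  ∀ Y : Finset X, Y.card = 2 ∨ Y.card = 3 → ∀ v : N.V, N.IsLca Y v → d.val Y = some (t v)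

/-- `δ` is level-1 representable. -/
def SymbolicDissim3.LevelOneRepresentable {X M : Type} [Fintype X] [DecidableEq X]
    (d : SymbolicDissim3 X M) : Prop :=
  ∃ (N : PhyloNetwork X) (t : N.V → M), N.IsLevelOne ∧ N.Represents t d
open Relation

section Aux
variable {α : Type*} {r : α → α → Prop}

lemma chain_cons' {r : α → α → Prop} {a b : α} {l : List α} :
    List.Chain r a (b :: l) ↔ r a b ∧ List.Chain r b l := List.isChain_cons_cons

lemma chain_reach_mem {a b : α} {l : List α} (h : List.Chain r a l) (hb : b ∈ a :: l) :
    ReflTransGen r a b := by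
  induction l generalizing a with
  | nil => simp at hb; subst hb; exact .refl
  | cons c l ih =>
    rw [chain_cons'] at h
    rcases List.mem_cons.mp hb with rfl | hb
    · exact .refl
    · exact .head h.1 (ih h.2 hb)

lemma chain_transGen_mem {a b : α} {l : List α} (h : List.Chain r a l) (hb : b ∈ l) :
    TransGen r a b := by
  induction l generalizing a with
  | nil => simp at hb
  | cons c l ih =>
    rw [chain_cons'] at h
    rcases List.mem_cons.mp hb with rfl | hb
    · exact .single h.1
    · exact .head h.1 (ih h.2 hb)

lemma chain_last_reach {a e : α} {l : List α} (h : List.Chain r a (l ++ [e])) :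
    ReflTransGen r a e := by
  induction l generalizing a with
  | nil => rw [List.nil_append, chain_cons'] at h; exact .single h.1
  | cons c l ih =>
    rw [List.cons_append, chain_cons'] at h
    exact .head h.1 (ih h.2)

lemma chain_reach_last {a b e : α} {l : List α} (h : List.Chain r a (l ++ [e]))
    (hb : b ∈ a :: (l ++ [e])) : ReflTransGen r b e := by
  induction l generalizing a with
  | nil =>
    simp only [List.nil_append] at h hb
    rw [chain_cons'] at h
    rcases List.mem_cons.mp hb with rfl | hb
    · exact .single h.1
    · simp at hb; subst hb; exact .refl
  | cons c l ih =>
    rw [List.cons_append, chain_cons'] at h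
    rcases List.mem_cons.mp hb with rfl | hb
    · exact .head h.1 (chain_last_reach h.2)
    · exact ih h.2 hb

lemma chain_nodup (hacy : ∀ v : α, ¬ TransGen r v v) {a : α} {l : List α}
    (h : List.Chain r a l) : (a :: l).Nodup := by
  induction l generalizing a with
  | nil => simp
  | cons c l ih =>
    refine List.nodup_cons.mpr ⟨fun hmem => hacy a (chain_transGen_mem h hmem),
      ih (List.chain_cons.mp h).2⟩

lemma exists_chain_of_reflTransGen {a b : α} (h : ReflTransGen r a b) :
    a = b ∨ ∃ l, List.Chain r a (l ++ [b]) := by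
  induction h using ReflTransGen.head_induction_on with
  | refl => exact Or.inl rfl
  | head hr _ ih =>
    right
    rcases ih with rfl | ⟨l, hl⟩
    · exact ⟨[], List.chain_cons.mpr ⟨hr, List.Chain.nil⟩⟩
    · exact ⟨_ :: l, List.chain_cons.mpr ⟨hr, hl⟩⟩

lemma dropWhile_head_false {p : α → Bool} {l : List α} {b : α} {t : List α}
    (h : l.dropWhile p = b :: t) : p b = false := by
  induction l with
  | nil => simp at h
  | cons c l ih =>
    rw [List.dropWhile_cons] at h
    by_cases hc : p c = true
    · rw [if_pos hc] at h; exact ih h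
    · rw [if_neg hc] at h
      cases h
      simpa using hc
end Aux

section Forward
open Relation PhyloNetwork
variable {X : Type} [Fintype X] [DecidableEq X]

lemma NCycle.reach_h' {N : PhyloNetwork X} (C : NCycle N) :
    ∀ w ∈ C.verts, N.reaches w C.h := by
  intro w hw
  simp only [NCycle.verts, Set.mem_union, Set.mem_insert_iff, Set.mem_singleton_iff,
    Set.mem_setOf_eq] at hw
  rcases hw with ((rfl | rfl) | hw) | hw
  · exact chain_reach_last C.chain1 List.mem_cons_self
  · exact ReflTransGen.refl
  · exact chain_reach_last C.chain1 (List.mem_cons.mpr (Or.inr (List.mem_append_left _ hw)))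
  · exact chain_reach_last C.chain2 (List.mem_cons.mpr (Or.inr (List.mem_append_left _ hw)))

lemma r_mem_verts {N : PhyloNetwork X} (C : NCycle N) : C.r ∈ C.verts := by
  simp [NCycle.verts]

lemma h_mem_verts {N : PhyloNetwork X} (C : NCycle N) : C.h ∈ C.verts := by
  simp [NCycle.verts]

lemma mk_cycle {N : PhyloNetwork X} {v c1 c2 u : N.V} (h1 : N.adj v c1) (h2 : N.adj v c2)
    (hne : c1 ≠ c2) (hc1u : c1 ≠ u) (hc2u : c2 ≠ u)
    (r1 : N.reaches c1 u) (r2 : N.reaches c2 u) :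
    ∃ C : NCycle N, C.r = v ∧ N.reaches c1 C.h ∧ N.reaches C.h u := by
  haveI := N.instDec
  rcases exists_chain_of_reflTransGen r1 with rfl | ⟨l1, hl1⟩
  · exact absurd rfl hc1u
  rcases exists_chain_of_reflTransGen r2 with rfl | ⟨l2, hl2⟩
  · exact absurd rfl hc2u
  set tail1 : List N.V := c1 :: (l1 ++ [u]) with ht1
  set tail2 : List N.V := c2 :: (l2 ++ [u]) with ht2
  have cht1 : List.Chain N.adj v tail1 := List.chain_cons.mpr ⟨h1, hl1⟩
  have cht2 : List.Chain N.adj v tail2 := List.chain_cons.mpr ⟨h2, hl2⟩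
  have nd1 : (v :: tail1).Nodup := chain_nodup N.acyclic cht1
  have nd2 : (v :: tail2).Nodup := chain_nodup N.acyclic cht2
  set p : N.V → Bool := fun a => decide (a ∉ tail2) with hp
  obtain ⟨h, rest1, hdrop1⟩ : ∃ h rest1, tail1.dropWhile p = h :: rest1 := by
    cases hd : tail1.dropWhile p with
    | nil =>
      exfalso
      have hu1 : u ∈ tail1.takeWhile p := by
        have heq := List.takeWhile_append_dropWhile (p := p) (l := tail1)
        rw [hd, List.append_nil] at heq
        rw [heq]; simp [ht1]
      have := List.mem_takeWhile_imp hu1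
      simp only [hp, decide_eq_true_eq] at this
      exact this (by simp [ht2])
    | cons h t => exact ⟨h, t, rfl⟩
  have hteq1 : tail1 = tail1.takeWhile p ++ h :: rest1 := by
    conv_lhs => rw [← List.takeWhile_append_dropWhile (p := p) (l := tail1), hdrop1]
  have hhp : h ∈ tail2 := by
    have := dropWhile_head_false hdrop1
    simpa [hp] using this
  have hh1 : h ∈ tail1 := by rw [hteq1]; simp
  set q : N.V → Bool := fun a => decide (a ≠ h) with hq
  obtain ⟨h', rest2, hdrop2⟩ : ∃ h' rest2, tail2.dropWhile q = h' :: rest2 := by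
    cases hd : tail2.dropWhile q with
    | nil =>
      exfalso
      have hu2 : h ∈ tail2.takeWhile q := by
        have heq := List.takeWhile_append_dropWhile (p := q) (l := tail2)
        rw [hd, List.append_nil] at heq
        rw [heq]; exact hhp
      have := List.mem_takeWhile_imp hu2
      simp [hq] at this
    | cons a t => exact ⟨a, t, rfl⟩
  have hh' : h' = h := by
    have := dropWhile_head_false hdrop2
    simpa [hq] using this
  rw [hh'] at hdrop2
  have hteq2 : tail2 = tail2.takeWhile q ++ h :: rest2 := by
    conv_lhs => rw [← List.takeWhile_append_dropWhile (p := q) (l := tail2), hdrop2]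
  -- prefixes
  have pref1 : (v :: (tail1.takeWhile p ++ [h])) <+: (v :: tail1) := by
    refine ⟨rest1, ?_⟩
    conv_rhs => rw [hteq1]
    simp
  have pref2 : (v :: (tail2.takeWhile q ++ [h])) <+: (v :: tail2) := by
    refine ⟨rest2, ?_⟩
    conv_rhs => rw [hteq2]
    simp
  have chain1 : List.Chain N.adj v (tail1.takeWhile p ++ [h]) := by
    have : List.Chain' N.adj (v :: (tail1.takeWhile p ++ [h])) :=
      List.IsChain.prefix (l := v :: tail1) cht1 pref1
    exact this
  have chain2 : List.Chain N.adj v (tail2.takeWhile q ++ [h]) := by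
    have : List.Chain' N.adj (v :: (tail2.takeWhile q ++ [h])) :=
      List.IsChain.prefix (l := v :: tail2) cht2 pref2
    exact this
  have nodup1 : (v :: (tail1.takeWhile p ++ [h])).Nodup := nd1.sublist pref1.sublist
  have nodup2 : (v :: (tail2.takeWhile q ++ [h])).Nodup := nd2.sublist pref2.sublist
  have hvh : v ≠ h := by
    intro heq
    exact (List.nodup_cons.mp nd1).1 (heq ▸ hh1)
  have disj : ∀ a ∈ tail1.takeWhile p, a ∉ tail2.takeWhile q := by
    intro a ha hmem
    have := List.mem_takeWhile_imp ha
    simp only [hp, decide_eq_true_eq] at this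
    exact this ((List.takeWhile_sublist q).subset hmem)
  have nontriv : tail1.takeWhile p ≠ [] ∨ tail2.takeWhile q ≠ [] := by
    by_contra hc
    push_neg at hc
    obtain ⟨e1, e2⟩ := hc
    rw [e1, List.nil_append, ht1] at hteq1
    rw [e2, List.nil_append, ht2] at hteq2
    simp only [List.cons.injEq] at hteq1 hteq2
    exact hne (hteq1.1.trans hteq2.1.symm)
  refine ⟨⟨v, h, tail1.takeWhile p, tail2.takeWhile q, chain1, chain2, hvh, nodup1, nodup2,
    disj, nontriv⟩, rfl, ?_, ?_⟩
  · exact chain_reach_mem hl1 hh1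
  · exact chain_reach_last hl1 hh1

end Forward
section Forward2
open Relation PhyloNetwork
variable {X : Type} [Fintype X] [DecidableEq X]

lemma exists_lca (N : PhyloNetwork X) (Y : Finset X) : ∃ v, N.IsLca Y v := by
  haveI := N.instFin
  have hwf : WellFounded (fun a b : N.V => Relation.TransGen N.adj b a) := by
    haveI : IsTrans N.V (fun a b => Relation.TransGen N.adj b a) :=
      ⟨fun a b c hab hbc => hbc.trans hab⟩
    haveI : IsIrrefl N.V (fun a b => Relation.TransGen N.adj b a) := ⟨fun a => N.acyclic a⟩
    exact Finite.wellFounded_of_trans_of_irrefl _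
  obtain ⟨v, hv, hmin⟩ := hwf.has_min {v | ∀ a ∈ Y, a ∈ N.F v}
    ⟨N.root, fun a _ => N.connected _⟩
  exact ⟨v, hv, fun w hw hcov => hmin w hcov (.single hw)⟩

lemma leaf_reach_eq {N : PhyloNetwork X} {a : X} {w : N.V}
    (h : N.reaches (N.leaf a) w) : w = N.leaf a := by
  rcases h.cases_head with heq | ⟨c, hc, _⟩
  · exact heq.symm
  · exact absurd hc (N.leaf_no_out a c)

lemma lca_triple_is_pair_lca {N : PhyloNetwork X} (hlvl : N.IsLevelOne)
    {x y z : X} (hxy : x ≠ y) (hxz : x ≠ z) (hyz : y ≠ z) {v : N.V}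
    (hv : N.IsLca {x, y, z} v) :
    N.IsLca {x, y} v ∨ N.IsLca {x, z} v ∨ N.IsLca {y, z} v := by
  by_contra hcon
  push_neg at hcon
  obtain ⟨n1, n2, n3⟩ := hcon
  have hcov := hv.1
  have hx : x ∈ N.F v := hcov x (by simp)
  have hy : y ∈ N.F v := hcov y (by simp)
  have hz : z ∈ N.F v := hcov z (by simp)
  have hnotall : ∀ c, N.adj v c → x ∈ N.F c → y ∈ N.F c → z ∈ N.F c → False := by
    intro c hc h1 h2 h3
    refine hv.2 c hc (fun t ht => ?_)
    simp only [Finset.mem_insert, Finset.mem_singleton] at ht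
    rcases ht with rfl | rfl | rfl
    exacts [h1, h2, h3]
  have get1 : ∀ (a b : X), ¬ N.IsLca {a, b} v → a ∈ N.F v → b ∈ N.F v →
      ∃ c, N.adj v c ∧ a ∈ N.F c ∧ b ∈ N.F c := by
    intro a b hn ha hb
    rw [PhyloNetwork.IsLca] at hn
    push_neg at hn
    obtain ⟨w, hw, hcovw⟩ := hn (fun t ht => by
      simp only [Finset.mem_insert, Finset.mem_singleton] at ht
      rcases ht with rfl | rfl
      exacts [ha, hb])
    exact ⟨w, hw, hcovw a (by simp), hcovw b (by simp)⟩
  obtain ⟨c1, hadj1, hc1x, hc1y⟩ := get1 x y n1 hx hy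
  obtain ⟨c2, hadj2, hc2x, hc2z⟩ := get1 x z n2 hx hz
  obtain ⟨c3, hadj3, hc3y, hc3z⟩ := get1 y z n3 hy hz
  -- distinctness from leaves
  have hleaf : ∀ (c : N.V) (a b : X), a ≠ b → a ∈ N.F c → b ∈ N.F c → ∀ e : X, c ≠ N.leaf e := by
    intro c a b hab ha hb e hce
    subst hce
    have h1 := leaf_reach_eq (ha : N.reaches _ _)
    have h2 := leaf_reach_eq (hb : N.reaches _ _)
    exact hab (N.leaf_inj (h1.trans h2.symm))
  have hne12 : c1 ≠ c2 := fun he => hnotall c1 hadj1 hc1x hc1y (he ▸ hc2z)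
  have hne23 : c2 ≠ c3 := fun he => hnotall c2 hadj2 hc2x (he ▸ hc3y) hc2z
  obtain ⟨Ca, hra, hc1ha, _⟩ := mk_cycle hadj1 hadj2 hne12
    (hleaf c1 x y hxy hc1x hc1y x) (hleaf c2 x z hxz hc2x hc2z x) hc1x hc2x
  obtain ⟨Cc, hrc, _, hhcz⟩ := mk_cycle hadj2 hadj3 hne23
    (hleaf c2 x z hxz hc2x hc2z z) (hleaf c3 y z hyz hc3y hc3z z) hc2z hc3z
  have hveq : Ca.verts = Cc.verts :=
    hlvl Ca Cc v (hra ▸ r_mem_verts Ca) (hrc ▸ r_mem_verts Cc)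
  have hha : Ca.h ∈ Cc.verts := hveq ▸ h_mem_verts Ca
  have hreach : N.reaches Ca.h Cc.h := NCycle.reach_h' Cc Ca.h hha
  exact hnotall c1 hadj1 hc1x hc1y ((hc1ha.trans hreach).trans hhcz)

end Forward2
section Backward
open Relation PhyloNetwork

inductive V7 : Type
  | rt | vb | vc | hb | lx | ly | lz
deriving DecidableEq

instance : Fintype V7 :=
  ⟨⟨↑[V7.rt, V7.vb, V7.vc, V7.hb, V7.lx, V7.ly, V7.lz], by decide⟩, fun x => by cases x <;> decide⟩

def adj7 : V7 → V7 → Bool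
  | .rt, .vb => true
  | .rt, .vc => true
  | .vb, .hb => true
  | .vc, .hb => true
  | .vb, .lx => true
  | .vc, .ly => true
  | .hb, .lz => true
  | _, _ => false

def rnk7 : V7 → ℕ
  | .rt => 0 | .vb => 1 | .vc => 1 | .hb => 2 | _ => 3

lemma adj7_rnk : ∀ a b, adj7 a b = true → rnk7 a < rnk7 b := by decide

def reach7B : V7 → V7 → Bool
  | .rt, _ => true
  | .vb, .vb => true
  | .vb, .hb => true
  | .vb, .lx => true
  | .vb, .lz => true
  | .vc, .vc => true
  | .vc, .hb => true
  | .vc, .ly => true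
  | .vc, .lz => true
  | .hb, .hb => true
  | .hb, .lz => true
  | .lx, .lx => true
  | .ly, .ly => true
  | .lz, .lz => true
  | _, _ => false

abbrev adj7P : V7 → V7 → Prop := fun a b => adj7 a b = true

lemma reach7_iff (a b : V7) : Relation.ReflTransGen adj7P a b ↔ reach7B a b = true := by
  constructor
  · intro h
    induction h with
    | refl =>
      have h0 : ∀ c, reach7B c c = true := by decide
      exact h0 a
    | tail _ hbc ih =>
      have : ∀ p q s, reach7B p q = true → adj7 q s = true → reach7B p s = true := by decide
      exact this _ _ _ ih hbc
  · intro h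
    have e : ∀ p q : V7, adj7 p q = true → Relation.ReflTransGen adj7P p q :=
      fun _ _ h => .single h
    have pbh : Relation.ReflTransGen adj7P .rt .hb :=
      .head (b := V7.vb) rfl (e .vb .hb rfl)
    have plx : Relation.ReflTransGen adj7P .rt .lx :=
      .head (b := V7.vb) rfl (e .vb .lx rfl)
    have ply : Relation.ReflTransGen adj7P .rt .ly :=
      .head (b := V7.vc) rfl (e .vc .ly rfl)
    have plz : Relation.ReflTransGen adj7P .rt .lz :=
      .head (b := V7.vb) rfl (.head (b := V7.hb) rfl (e .hb .lz rfl))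
    have pblz : Relation.ReflTransGen adj7P .vb .lz :=
      .head (b := V7.hb) rfl (e .hb .lz rfl)
    have pclz : Relation.ReflTransGen adj7P .vc .lz :=
      .head (b := V7.hb) rfl (e .hb .lz rfl)
    cases a <;> cases b <;>
      first
        | exact absurd h (by decide)
        | exact .refl
        | exact e _ _ rfl
        | exact pbh
        | exact plx
        | exact ply
        | exact plz
        | exact pblz
        | exact pclz

lemma reach7_closed (P : V7 → Prop) (hP : ∀ a b, P a → adj7 a b = true → P b)
    {a b : V7} (h : Relation.ReflTransGen adj7P a b) (ha : P a) : P b := by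
  induction h with
  | refl => exact ha
  | tail _ hbc ih => exact hP _ _ ih hbc

set_option linter.unusedSectionVars false

variable {X : Type} [Fintype X] [DecidableEq X]

def leaf7 (x y : X) : X → V7 := fun w => if w = x then .lx else if w = y then .ly else .lz

lemma leaf7_x {x y : X} : leaf7 x y x = V7.lx := by simp [leaf7]
lemma leaf7_y {x y : X} (hxy : x ≠ y) : leaf7 x y y = V7.ly := by
  simp [leaf7, Ne.symm hxy]
lemma leaf7_z {x y z : X} (hxz : x ≠ z) (hyz : y ≠ z) : leaf7 x y z = V7.lz := by
  simp [leaf7, Ne.symm hxz, Ne.symm hyz]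

def net7 (x y z : X) (hxy : x ≠ y) (hxz : x ≠ z) (hyz : y ≠ z)
    (hcover : ∀ w : X, w = x ∨ w = y ∨ w = z) : PhyloNetwork X where
  V := V7
  instFin := inferInstance
  instDec := inferInstance
  adj a b := adj7 a b = true
  root := .rt
  leaf := leaf7 x y
  acyclic := by
    intro v hv
    have key : ∀ a b : V7, Relation.TransGen adj7P a b → rnk7 a < rnk7 b := by
      intro a b h
      induction h with
      | single h => exact adj7_rnk _ _ h
      | tail _ h ih => exact lt_trans ih (adj7_rnk _ _ h)
    exact lt_irrefl _ (key v v hv)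
  root_no_in := by decide
  connected := by
    intro v
    have : ∀ w, reach7B V7.rt w = true := by decide
    exact (reach7_iff _ _).mpr (this v)
  leaf_inj := by
    intro a b hab
    rcases hcover a with rfl | rfl | rfl <;> rcases hcover b with rfl | rfl | rfl <;>
      simp only [leaf7_x, leaf7_y hxy, leaf7_z hxz hyz] at hab <;>
      first | rfl | exact absurd hab (by decide)
  leaf_no_out := by
    intro a
    rcases hcover a with rfl | rfl | rfl
    · rw [leaf7_x]; decide
    · rw [leaf7_y hxy]; decide
    · rw [leaf7_z hxz hyz]; decide
  leaves_only := by
    intro v hv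
    cases v with
    | rt => exact Or.inl rfl
    | vb => exact absurd rfl (hv V7.hb)
    | vc => exact absurd rfl (hv V7.hb)
    | hb => exact absurd rfl (hv V7.lz)
    | lx => exact Or.inr ⟨x, leaf7_x⟩
    | ly => exact Or.inr ⟨y, leaf7_y hxy⟩
    | lz => exact Or.inr ⟨z, leaf7_z hxz hyz⟩
  no_inout_one := by
    intro v hv
    cases v with
    | rt =>
      obtain ⟨u, hu, _⟩ := hv.1
      exact (by decide : ∀ u, ¬ adj7 u V7.rt = true) u hu
    | vb =>
      obtain ⟨w, _, hww⟩ := hv.2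
      exact absurd ((hww V7.hb rfl).trans (hww V7.lx rfl).symm) (by decide)
    | vc =>
      obtain ⟨w, _, hww⟩ := hv.2
      exact absurd ((hww V7.hb rfl).trans (hww V7.ly rfl).symm) (by decide)
    | hb =>
      obtain ⟨u, _, huu⟩ := hv.1
      exact absurd ((huu V7.vb rfl).trans (huu V7.vc rfl).symm) (by decide)
    | lx =>
      obtain ⟨w, hw, _⟩ := hv.2
      exact (by decide : ∀ w, ¬ adj7 V7.lx w = true) w hw
    | ly =>
      obtain ⟨w, hw, _⟩ := hv.2
      exact (by decide : ∀ w, ¬ adj7 V7.ly w = true) w hw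
    | lz =>
      obtain ⟨w, hw, _⟩ := hv.2
      exact (by decide : ∀ w, ¬ adj7 V7.lz w = true) w hw

end Backward
section Backward2
open Relation PhyloNetwork
set_option linter.unusedSectionVars false
variable {X : Type} [Fintype X] [DecidableEq X]

lemma chain_last_adj {α : Type*} {r : α → α → Prop} :
    ∀ {l : List α} {a e : α}, List.Chain r a (l ++ [e]) →
      r ((a :: l).getLast (List.cons_ne_nil a l)) e := by
  intro l
  induction l with
  | nil =>
    intro a e h
    rw [List.nil_append, chain_cons'] at h
    simpa using h.1
  | cons c l ih =>
    intro a e h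
    rw [List.cons_append, chain_cons'] at h
    have := ih h.2
    rwa [List.getLast_cons (List.cons_ne_nil c l)]

lemma chain7_to_hb : ∀ (l : List V7) (r : V7), List.Chain adj7P r (l ++ [V7.hb]) →
    (r = .rt ∧ (l = [.vb] ∨ l = [.vc])) ∨ (r = .vb ∧ l = []) ∨ (r = .vc ∧ l = []) := by
  intro l
  induction l with
  | nil =>
    intro r h
    rw [List.nil_append, chain_cons'] at h
    rcases (by decide : ∀ r, adj7 r V7.hb = true → r = V7.vb ∨ r = V7.vc) r h.1 with rfl | rfl
    · exact Or.inr (Or.inl ⟨rfl, rfl⟩)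
    · exact Or.inr (Or.inr ⟨rfl, rfl⟩)
  | cons c l ih =>
    intro r h
    rw [List.cons_append, chain_cons'] at h
    rcases ih c h.2 with ⟨rfl, hl⟩ | ⟨rfl, rfl⟩ | ⟨rfl, rfl⟩
    · exact absurd h.1 ((by decide : ∀ r, ¬ adj7 r V7.rt = true) r)
    · have : r = V7.rt := (by decide : ∀ r, adj7 r V7.vb = true → r = V7.rt) r h.1
      exact Or.inl ⟨this, Or.inl rfl⟩
    · have : r = V7.rt := (by decide : ∀ r, adj7 r V7.vc = true → r = V7.rt) r h.1
      exact Or.inl ⟨this, Or.inr rfl⟩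

lemma net7_cycle_verts (x y z : X) (hxy : x ≠ y) (hxz : x ≠ z) (hyz : y ≠ z)
    (hcover : ∀ w : X, w = x ∨ w = y ∨ w = z)
    (C : NCycle (net7 x y z hxy hxz hyz hcover)) :
    C.verts = ({V7.rt, V7.hb, V7.vb, V7.vc} : Set V7) := by
  have hadj1 : adj7 ((C.r :: C.side1).getLast (List.cons_ne_nil _ _)) C.h = true :=
    chain_last_adj C.chain1
  have hadj2 : adj7 ((C.r :: C.side2).getLast (List.cons_ne_nil _ _)) C.h = true :=
    chain_last_adj C.chain2
  have hr1 : C.r ∉ C.side1 := fun hm => (List.nodup_cons.mp C.nodup1).1 (List.mem_append_left _ hm)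
  have hr2 : C.r ∉ C.side2 := fun hm => (List.nodup_cons.mp C.nodup2).1 (List.mem_append_left _ hm)
  have hlast_mem : ∀ (r : V7) (l : List V7) (hl : l ≠ []), (r :: l).getLast (List.cons_ne_nil _ _) ∈ l := by
    intro r l hl
    rw [List.getLast_cons hl]
    exact List.getLast_mem hl
  have hp12 : (C.r :: C.side1).getLast (List.cons_ne_nil _ _) ≠
      (C.r :: C.side2).getLast (List.cons_ne_nil _ _) := by
    by_cases h1 : C.side1 = []
    · by_cases h2 : C.side2 = []
      · rcases C.nontriv with h | h <;> contradiction
      · have e1 : (C.r :: C.side1).getLast (List.cons_ne_nil _ _) = C.r := by simp [h1]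
        intro heq
        have e2 : (C.r :: C.side2).getLast (List.cons_ne_nil _ _) = C.r := heq.symm.trans e1
        exact hr2 (e2 ▸ hlast_mem C.r C.side2 h2)
    · by_cases h2 : C.side2 = []
      · have e2 : (C.r :: C.side2).getLast (List.cons_ne_nil _ _) = C.r := by simp [h2]
        intro heq
        have e1 : (C.r :: C.side1).getLast (List.cons_ne_nil _ _) = C.r := heq.trans e2
        exact hr1 (e1 ▸ hlast_mem C.r C.side1 h1)
      · intro heq
        exact C.disj _ (hlast_mem C.r C.side1 h1) (heq ▸ hlast_mem C.r C.side2 h2)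
  have hhb : C.h = V7.hb :=
    (by decide : ∀ p q e : V7, p ≠ q → adj7 p e = true → adj7 q e = true → e = V7.hb)
      _ _ _ hp12 hadj1 hadj2
  have ch1 := C.chain1
  have ch2 := C.chain2
  rw [hhb] at ch1 ch2
  rcases chain7_to_hb _ _ ch1 with ⟨hra, hs1⟩ | ⟨hra, hs1⟩ | ⟨hra, hs1⟩ <;>
    rcases chain7_to_hb _ _ ch2 with ⟨hrb, hs2⟩ | ⟨hrb, hs2⟩ | ⟨hrb, hs2⟩
  · -- r = rt, both sides in {[vb],[vc]}
    rcases hs1 with hs1 | hs1 <;> rcases hs2 with hs2 | hs2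
    · exact absurd (hs2 ▸ List.mem_singleton_self _)
        (C.disj _ (hs1 ▸ List.mem_singleton_self _))
    · ext w
      simp [NCycle.verts, hra, hhb, hs1, hs2]
      revert w
      change ∀ w : V7, (w ∈ ({V7.rt, V7.hb} : Set V7) ∨ w ∈ ([_] : List V7)) ∨
        w ∈ ([_] : List V7) ↔ w ∈ ({V7.rt, V7.hb, V7.vb, V7.vc} : Set V7)
      intro w
      simp only [Set.mem_insert_iff, Set.mem_singleton_iff, List.mem_singleton]
      tauto
    · ext w
      simp [NCycle.verts, hra, hhb, hs1, hs2]
      revert w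
      change ∀ w : V7, (w ∈ ({V7.rt, V7.hb} : Set V7) ∨ w ∈ ([_] : List V7)) ∨
        w ∈ ([_] : List V7) ↔ w ∈ ({V7.rt, V7.hb, V7.vb, V7.vc} : Set V7)
      intro w
      simp only [Set.mem_insert_iff, Set.mem_singleton_iff, List.mem_singleton]
      tauto
    · exact absurd (hs2 ▸ List.mem_singleton_self _)
        (C.disj _ (hs1 ▸ List.mem_singleton_self _))
  all_goals first
    | (exact absurd (hra.symm.trans hrb) (by decide))
    | (rcases C.nontriv with h | h <;> [exact absurd hs1 h; exact absurd hs2 h])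

lemma net7_level1 (x y z : X) (hxy : x ≠ y) (hxz : x ≠ z) (hyz : y ≠ z)
    (hcover : ∀ w : X, w = x ∨ w = y ∨ w = z) :
    (net7 x y z hxy hxz hyz hcover).IsLevelOne := by
  intro C C' v _ _
  rw [net7_cycle_verts x y z hxy hxz hyz hcover C, net7_cycle_verts x y z hxy hxz hyz hcover C']

end Backward2
section Final
open Relation PhyloNetwork
set_option linter.unusedSectionVars false
variable {X : Type} [Fintype X] [DecidableEq X]

lemma backward_construct {M : Type} (x y z : X) (hxy : x ≠ y) (hxz : x ≠ z) (hyz : y ≠ z)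
    (hcover : ∀ w : X, w = x ∨ w = y ∨ w = z) (d : SymbolicDissim3 X M)
    (hhelly : d.val {x, y, z} = d.val {x, y}) : d.LevelOneRepresentable := by
  have hc2a : ({x, y} : Finset X).card = 2 := by
    rw [Finset.card_insert_of_notMem (by simp [hxy]), Finset.card_singleton]
  have hc2b : ({x, z} : Finset X).card = 2 := by
    rw [Finset.card_insert_of_notMem (by simp [hxz]), Finset.card_singleton]
  have hc2c : ({y, z} : Finset X).card = 2 := by
    rw [Finset.card_insert_of_notMem (by simp [hyz]), Finset.card_singleton]
  have hc3 : ({x, y, z} : Finset X).card = 3 := by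
    rw [Finset.card_insert_of_notMem (by simp [hxy, hxz]), hc2c]
  obtain ⟨m1, hm1⟩ := Option.ne_none_iff_exists'.mp (d.pair_some _ (Or.inl hc2a))
  obtain ⟨m2, hm2⟩ := Option.ne_none_iff_exists'.mp (d.pair_some _ (Or.inl hc2b))
  obtain ⟨m3, hm3⟩ := Option.ne_none_iff_exists'.mp (d.pair_some _ (Or.inl hc2c))
  refine ⟨net7 x y z hxy hxz hyz hcover,
    (fun v => match v with | V7.vb => m2 | V7.vc => m3 | _ => m1),
    net7_level1 x y z hxy hxz hyz hcover, ?_⟩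
  set N := net7 x y z hxy hxz hyz hcover with hN
  have memF : ∀ (v : V7) (a : X), a ∈ N.F v ↔ reach7B v (leaf7 x y a) = true :=
    fun v a => reach7_iff v _
  have hlfx : leaf7 x y x = V7.lx := leaf7_x
  have hlfy : leaf7 x y y = V7.ly := leaf7_y hxy
  have hlfz : leaf7 x y z = V7.lz := leaf7_z hxz hyz
  have lca_xy : ∀ v : V7, N.IsLca {x, y} v → v = V7.rt := by
    intro v hv
    have h1 : reach7B v V7.lx = true := by
      have := (memF v x).mp (hv.1 x (by simp)); rwa [hlfx] at this
    have h2 : reach7B v V7.ly = true := by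
      have := (memF v y).mp (hv.1 y (by simp)); rwa [hlfy] at this
    exact (by decide : ∀ w, reach7B w V7.lx = true → reach7B w V7.ly = true → w = V7.rt) v h1 h2
  have covb : ∀ a ∈ ({x, z} : Finset X), a ∈ N.F V7.vb := by
    intro a ha
    rcases Finset.mem_insert.mp ha with rfl | ha
    · exact (memF _ _).mpr (by rw [hlfx]; decide)
    · have := Finset.mem_singleton.mp ha
      subst this
      exact (memF _ _).mpr (by rw [hlfz]; decide)
  have covc : ∀ a ∈ ({y, z} : Finset X), a ∈ N.F V7.vc := by
    intro a ha
    rcases Finset.mem_insert.mp ha with rfl | ha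
    · exact (memF _ _).mpr (by rw [hlfy]; decide)
    · have := Finset.mem_singleton.mp ha
      subst this
      exact (memF _ _).mpr (by rw [hlfz]; decide)
  have lca_xz : ∀ v : V7, N.IsLca {x, z} v → v = V7.vb := by
    intro v hv
    have h1 : reach7B v V7.lx = true := by
      have := (memF v x).mp (hv.1 x (by simp)); rwa [hlfx] at this
    have h2 : reach7B v V7.lz = true := by
      have := (memF v z).mp (hv.1 z (by simp)); rwa [hlfz] at this
    rcases (by decide : ∀ w, reach7B w V7.lx = true → reach7B w V7.lz = true →
        w = V7.rt ∨ w = V7.vb) v h1 h2 with rfl | rfl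
    · exact absurd covb (hv.2 V7.vb rfl)
    · rfl
  have lca_yz : ∀ v : V7, N.IsLca {y, z} v → v = V7.vc := by
    intro v hv
    have h1 : reach7B v V7.ly = true := by
      have := (memF v y).mp (hv.1 y (by simp)); rwa [hlfy] at this
    have h2 : reach7B v V7.lz = true := by
      have := (memF v z).mp (hv.1 z (by simp)); rwa [hlfz] at this
    rcases (by decide : ∀ w, reach7B w V7.ly = true → reach7B w V7.lz = true →
        w = V7.rt ∨ w = V7.vc) v h1 h2 with rfl | rfl
    · exact absurd covc (hv.2 V7.vc rfl)
    · rfl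
  have lca_xyz : ∀ v : V7, N.IsLca {x, y, z} v → v = V7.rt := by
    intro v hv
    have h1 : reach7B v V7.lx = true := by
      have := (memF v x).mp (hv.1 x (by simp)); rwa [hlfx] at this
    have h2 : reach7B v V7.ly = true := by
      have := (memF v y).mp (hv.1 y (by simp)); rwa [hlfy] at this
    exact (by decide : ∀ w, reach7B w V7.lx = true → reach7B w V7.ly = true → w = V7.rt) v h1 h2
  have hsub : ∀ Y : Finset X, Y ⊆ {x, y, z} := by
    intro Y a _
    rcases hcover a with rfl | rfl | rfl <;> simp
  have hYclass : ∀ Y : Finset X, Y.card = 2 ∨ Y.card = 3 →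
      Y = {x, y} ∨ Y = {x, z} ∨ Y = {y, z} ∨ Y = {x, y, z} := by
    intro Y hY
    rcases hY with h2 | h3
    · obtain ⟨a, b, hab, rfl⟩ := Finset.card_eq_two.mp h2
      rcases hcover a with rfl | rfl | rfl <;> rcases hcover b with rfl | rfl | rfl
      · exact absurd rfl hab
      · exact Or.inl rfl
      · exact Or.inr (Or.inl rfl)
      · exact Or.inl (Finset.pair_comm _ _)
      · exact absurd rfl hab
      · exact Or.inr (Or.inr (Or.inl rfl))
      · exact Or.inr (Or.inl (Finset.pair_comm _ _))
      · exact Or.inr (Or.inr (Or.inl (Finset.pair_comm _ _)))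
      · exact absurd rfl hab
    · exact Or.inr (Or.inr (Or.inr
        (Finset.eq_of_subset_of_card_le (hsub Y) (le_of_eq (hc3.trans h3.symm)))))
  intro Y hY v hv
  rcases hYclass Y hY with rfl | rfl | rfl | rfl
  · rw [lca_xy v hv]; exact hm1
  · rw [lca_xz v hv]; exact hm2
  · rw [lca_yz v hv]; exact hm3
  · rw [lca_xyz v hv]; exact hhelly.trans hm1

end Final

/-- For a symbolic 3-dissimilarity on a 3-set `X = {x,y,z}`: `δ` has a level-1
representation iff it satisfies the Helly-type property
`δ(x,y,z) ∈ {δ(x,y), δ(x,z), δ(y,z)}`. -/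
theorem levelOneRepresentable_iff_helly_on_three {X M : Type}
    [Fintype X] [DecidableEq X] [Fintype M] [DecidableEq M]
    (x y z : X) (hxy : x ≠ y) (hxz : x ≠ z) (hyz : y ≠ z)
    (hcover : ∀ w : X, w = x ∨ w = y ∨ w = z)
    (d : SymbolicDissim3 X M) :
    d.LevelOneRepresentable ↔
      (d.val {x, y, z} = d.val {x, y} ∨ d.val {x, y, z} = d.val {x, z} ∨
        d.val {x, y, z} = d.val {y, z}) := by
  have hc2a : ({x, y} : Finset X).card = 2 := by
    rw [Finset.card_insert_of_notMem (by simp [hxy]), Finset.card_singleton]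
  have hc2b : ({x, z} : Finset X).card = 2 := by
    rw [Finset.card_insert_of_notMem (by simp [hxz]), Finset.card_singleton]
  have hc2c : ({y, z} : Finset X).card = 2 := by
    rw [Finset.card_insert_of_notMem (by simp [hyz]), Finset.card_singleton]
  have hc3 : ({x, y, z} : Finset X).card = 3 := by
    rw [Finset.card_insert_of_notMem (by simp [hxy, hxz]), hc2c]
  constructor
  · rintro ⟨N, t, hlvl, hrep⟩
    obtain ⟨v, hv⟩ := exists_lca N {x, y, z}
    have h3 := hrep {x, y, z} (Or.inr hc3) v hv
    rcases lca_triple_is_pair_lca hlvl hxy hxz hyz hv with h | h | h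
    · exact Or.inl (h3.trans (hrep {x, y} (Or.inl hc2a) v h).symm)
    · exact Or.inr (Or.inl (h3.trans (hrep {x, z} (Or.inl hc2b) v h).symm))
    · exact Or.inr (Or.inr (h3.trans (hrep {y, z} (Or.inl hc2c) v h).symm))
  · rintro (h | h | h)
    · exact backward_construct x y z hxy hxz hyz hcover d h
    · have hset : ({x, z, y} : Finset X) = {x, y, z} := by
        rw [Finset.pair_comm z y]
      refine backward_construct x z y hxz hxy (Ne.symm hyz)
        (fun w => by rcases hcover w with hw | hw | hw <;> tauto) d ?_
      rw [hset]
      exact h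
    · have hset : ({y, z, x} : Finset X) = {x, y, z} := by
        ext a; simp; tauto
      refine backward_construct y z x hyz (Ne.symm hxy) (Ne.symm hxz)
        (fun w => by rcases hcover w with hw | hw | hw <;> tauto) d ?_
      rw [hset]
      exact h
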